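/- For even k with k ≤ n/2 and n large, the spectral gap λ_1 - λ_2 := 2·∑_{i=1}^{k/2}[cos(2πi/n) - cos(4πi/n)] satisfies λ_1 - λ_2 ≥ c·k³/n² for an absolute constant c > 0. -/

import Mathlib

open Real

lemma cos_gap_lower {x : ℝ} (hx : 0 ≤ x) (hx' : x ≤ π / 4) :
    6 / π ^ 2 * x ^ 2 ≤ Real.cos x - Real.cos (2 * x) := by
  have hπ := Real.pi_pos
  have key : Real.cos x - Real.cos (2 * x) = 2 * Real.sin (3 * x / 2) * Real.sin (x / 2) := by
    rw [Real.cos_sub_cos]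
    have h1 : (x + 2 * x) / 2 = 3 * x / 2 := by ring
    have h2 : (x - 2 * x) / 2 = -(x / 2) := by ring
    rw [h1, h2, Real.sin_neg]
    ring
  rw [key]
  have hs1 : 2 / π * (3 * x / 2) ≤ Real.sin (3 * x / 2) := by
    apply Real.mul_le_sin (by linarith) (by linarith)
  have hs2 : 2 / π * (x / 2) ≤ Real.sin (x / 2) := by
    apply Real.mul_le_sin (by linarith) (by linarith)
  have h1nn : 0 ≤ 2 / π * (3 * x / 2) := by positivity
  have h2nn : 0 ≤ 2 / π * (x / 2) := by positivity
  have hmul : (2 / π * (3 * x / 2)) * (2 / π * (x / 2)) ≤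
      Real.sin (3 * x / 2) * Real.sin (x / 2) :=
    mul_le_mul hs1 hs2 h2nn (le_trans h1nn hs1)
  have : (2 / π * (3 * x / 2)) * (2 / π * (x / 2)) = 3 / π ^ 2 * x ^ 2 := by
    field_simp
  have hmul' : 3 / π ^ 2 * x ^ 2 ≤ Real.sin (3 * x / 2) * Real.sin (x / 2) := by
    rw [← this]; exact hmul
  have hπ2 : (0:ℝ) < π ^ 2 := by positivity
  rw [div_mul_eq_mul_div, div_le_iff₀ hπ2] at hmul'
  rw [div_mul_eq_mul_div, div_le_iff₀ hπ2]
  linarith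

lemma sum_sq_lower (m : ℕ) : (m : ℝ) ^ 3 / 3 ≤ ∑ i ∈ Finset.Icc 1 m, (i : ℝ) ^ 2 := by
  induction m with
  | zero => simp
  | succ m ih =>
      rw [Finset.sum_Icc_succ_top (by omega : 1 ≤ m + 1)]
      push_cast
      have hm0 : (0:ℝ) ≤ m := Nat.cast_nonneg m
      nlinarith [ih, hm0]

/-- For even `k` with `k ≤ n/4` and `n` large, the spectral gap
`λ_1 - λ_2 = 2·∑_{i=1}^{k/2} [cos(2πi/n) - cos(4πi/n)]` of the ring lattice circulant
matrix satisfies `λ_1 - λ_2 ≥ c·k³/n²` for an absolute constant `c > 0`. -/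
theorem ring_lattice_spectral_gap :
    ∃ c : ℝ, 0 < c ∧ ∃ N : ℕ, ∀ n k : ℕ, N ≤ n → 0 < k → Even k → 4 * k ≤ n →
      c * k ^ 3 / n ^ 2 ≤
        2 * ∑ i ∈ Finset.Icc 1 (k / 2),
          (Real.cos (2 * π * i / n) - Real.cos (4 * π * i / n)) := by
  refine ⟨1, one_pos, 1, ?_⟩
  intro n k hN hk hke hkn
  have hπ := Real.pi_pos
  have hn : 0 < n := lt_of_lt_of_le one_pos hN
  have hnR : (0:ℝ) < n := by exact_mod_cast hn
  set m := k / 2 with hm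
  have hkm : k = 2 * m := (Nat.two_mul_div_two_of_even hke).symm
  -- per-term bound
  have hterm : ∀ i ∈ Finset.Icc 1 m, 24 * (i:ℝ)^2 / (n:ℝ)^2 ≤
      Real.cos (2 * π * i / n) - Real.cos (4 * π * i / n) := by
    intro i hi
    simp only [Finset.mem_Icc] at hi
    set x : ℝ := 2 * π * i / n with hx
    have hiR : (1:ℝ) ≤ i := by exact_mod_cast hi.1
    have hxnn : 0 ≤ x := by positivity
    have him : (i:ℝ) ≤ m := by exact_mod_cast hi.2
    have hknR : 4 * (k:ℝ) ≤ n := by exact_mod_cast hkn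
    have hmn : 8 * (m:ℝ) ≤ n := by
      have : (k:ℝ) = 2 * m := by exact_mod_cast hkm
      linarith
    have hx4 : x ≤ π / 4 := by
      rw [hx, div_le_div_iff₀ hnR (by norm_num : (0:ℝ) < 4)]
      nlinarith
    have h2x : 4 * π * i / n = 2 * x := by rw [hx]; ring
    rw [h2x]
    have := cos_gap_lower hxnn hx4
    have hxval : 6 / π ^ 2 * x ^ 2 = 24 * (i:ℝ)^2 / (n:ℝ)^2 := by
      rw [hx]; field_simp; ring
    linarith [hxval ▸ this]
  have hsum : ∑ i ∈ Finset.Icc 1 m, 24 * (i:ℝ)^2 / (n:ℝ)^2 ≤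
      ∑ i ∈ Finset.Icc 1 m, (Real.cos (2 * π * i / n) - Real.cos (4 * π * i / n)) :=
    Finset.sum_le_sum hterm
  have hsum2 : (24 / (n:ℝ)^2) * ((m:ℝ)^3 / 3) ≤ ∑ i ∈ Finset.Icc 1 m, 24 * (i:ℝ)^2 / (n:ℝ)^2 := by
    rw [show ∑ i ∈ Finset.Icc 1 m, 24 * (i:ℝ)^2 / (n:ℝ)^2
        = (24 / (n:ℝ)^2) * ∑ i ∈ Finset.Icc 1 m, (i:ℝ)^2 by
      rw [Finset.mul_sum]; apply Finset.sum_congr rfl; intro i _; ring]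
    have := sum_sq_lower m
    have h24 : (0:ℝ) < 24 / (n:ℝ)^2 := by positivity
    exact mul_le_mul_of_nonneg_left this h24.le
  have hkmR : (k:ℝ) = 2 * m := by exact_mod_cast hkm
  have hfinal : (1:ℝ) * (k:ℝ)^3 / (n:ℝ)^2 ≤ 2 * ((24 / (n:ℝ)^2) * ((m:ℝ)^3 / 3)) := by
    rw [hkmR]
    have heq : 2 * ((24 / (n:ℝ)^2) * ((m:ℝ)^3 / 3)) = 16 * (m:ℝ)^3 / (n:ℝ)^2 := by
      field_simp; ring
    rw [heq, div_le_div_iff₀ (by positivity) (by positivity)]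
    nlinarith [pow_nonneg (show (0:ℝ) ≤ (m:ℝ) from Nat.cast_nonneg m) 3,
      pow_pos hnR 2]
  calc (1:ℝ) * (k:ℝ)^3 / (n:ℝ)^2 ≤ 2 * ((24 / (n:ℝ)^2) * ((m:ℝ)^3 / 3)) := hfinal
    _ ≤ 2 * ∑ i ∈ Finset.Icc 1 m, (Real.cos (2 * π * i / n) - Real.cos (4 * π * i / n)) := by
        linarith [hsum, hsum2]
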